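/- Let n ≥ 4 be an integer, let φ = 400000·n², let r = (n−3)/n, and let i be an integer with 1 ≤ i and i + 1 ≤ n. Then for all reals s₁, …, s_{n+3} ∈ [0, 1/φ], w ∈ [−r^{2i−1}, −r^{2i−1} + 1/φ], t ∈ [−1/φ, 0], p₁, …, p_{2n+6} ∈ [0, 1/φ], w' ∈ [−r^{2i−1}, −r^{2i−1} + 1/φ], and q ∈ [−r^{2i}, −r^{2i} + 1/φ]: (w + ∑_{j=1}^{n+3} s_j + t)/(n+5) < (w' + q + ∑_{j=1}^{2n+6} p_j)/(2n+8). In particular (worst case) (−r^{2i−1} + (n+4)/φ)/(n+5) < (−r^{2i−1} − r^{2i})/(2n+8). -/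

import Mathlib

lemma exp_half21' : Real.exp (21/2) < 40000 := by
  have h1 : Real.exp 21 < 2.7182818286 ^ (21:ℕ) := by
    calc Real.exp 21 = Real.exp 1 ^ (21:ℕ) := by
          rw [← Real.exp_nat_mul]; norm_num
      _ < 2.7182818286 ^ (21:ℕ) := by
          exact pow_lt_pow_left₀ Real.exp_one_lt_d9 (Real.exp_pos 1).le (by norm_num)
  have h2 : (2.7182818286:ℝ) ^ (21:ℕ) < 40000 ^ 2 := by norm_num
  have h3 : Real.exp (21/2) ^ 2 = Real.exp 21 := by
    rw [← Real.exp_nat_mul]; norm_num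
  nlinarith [Real.exp_pos (21/2 : ℝ)]

lemma rpow_lb' (n : ℕ) (hn : 4 ≤ n) (r : ℝ) (hr : r = ((n : ℝ) - 3) / n) :
    (1:ℝ)/40000 ≤ r ^ (2 * n - 3) := by
  have hn0 : (0:ℝ) < n := by positivity
  rcases eq_or_lt_of_le hn with h4 | h5
  · subst hr; rw [← h4]; norm_num
  · have hn5 : (5:ℝ) ≤ n := by exact_mod_cast h5
    set m : ℝ := (n:ℝ) - 3 with hm
    have hm2 : (2:ℝ) ≤ m := by rw [hm]; linarith
    have hm0 : (0:ℝ) < m := by linarith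
    have hrval : r = m / (m + 3) := by
      rw [hr, hm]; ring_nf
    have hrpos : 0 < r := by rw [hrval]; positivity
    have hrinv : r⁻¹ = 3/m + 1 := by
      rw [hrval, inv_div]; field_simp; ring
    have hre : Real.exp (-(3/m)) ≤ r := by
      rw [Real.exp_neg, inv_le_comm₀ (Real.exp_pos _) hrpos, hrinv]
      exact Real.add_one_le_exp _
    have hk : Real.exp (-(3/m)) ^ (2 * n - 3) ≤ r ^ (2 * n - 3) :=
      pow_le_pow_left₀ (Real.exp_pos _).le hre _
    have hke : Real.exp (-(3/m)) ^ (2 * n - 3) = Real.exp (-(3/m) * ((2 * n - 3 : ℕ) : ℝ)) := by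
      rw [← Real.exp_nat_mul]; ring_nf
    have hcast : ((2 * n - 3 : ℕ) : ℝ) = 2 * (n:ℝ) - 3 := by
      have h3 : 3 ≤ 2 * n := by omega
      push_cast [h3]; ring
    have harg : -(21/2) ≤ -(3/m) * (2 * (n:ℝ) - 3) := by
      have hpos : (3/m) * (2 * (n:ℝ) - 3) ≤ 21/2 := by
        rw [div_mul_eq_mul_div, div_le_iff₀ hm0]
        rw [hm]; nlinarith
      nlinarith
    have hmono : Real.exp (-(21/2)) ≤ Real.exp (-(3/m) * (2 * (n:ℝ) - 3)) :=
      Real.exp_le_exp.mpr harg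
    have hfin : (1:ℝ)/40000 ≤ Real.exp (-(21/2)) := by
      rw [Real.exp_neg, one_div, inv_le_inv₀ (by norm_num) (Real.exp_pos _)]
      exact (exp_half21').le
    calc (1:ℝ)/40000 ≤ Real.exp (-(21/2)) := hfin
      _ ≤ Real.exp (-(3/m) * (2 * (n:ℝ) - 3)) := hmono
      _ = Real.exp (-(3/m)) ^ (2 * n - 3) := by rw [hke, hcast]
      _ ≤ r ^ (2 * n - 3) := hk

lemma key' (n : ℕ) (hn : 4 ≤ n) (R r : ℝ) (hr : r = ((n:ℝ)-3)/n) (hR : 1/40000 ≤ R) :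
    (-R + ((n:ℝ)+4)/(400000*(n:ℝ)^2))/((n:ℝ)+5) < (-R - R*r)/(2*(n:ℝ)+8) := by
  have hn4 : (4:ℝ) ≤ n := by exact_mod_cast hn
  have hn0 : (0:ℝ) < n := by linarith
  rw [div_lt_div_iff₀ (by linarith) (by linarith), hr]
  have h1 : (-R - R * (((n:ℝ)-3)/n)) * ((n:ℝ)+5) = -R * ((2*(n:ℝ)+8) - ((n:ℝ)+15)/n) := by
    field_simp; ring
  rw [h1]
  have h2 : ((n:ℝ)+4)/(400000*(n:ℝ)^2) * (2*(n:ℝ)+8) < R * (((n:ℝ)+15)/n) := by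
    rw [div_mul_eq_mul_div, div_lt_iff₀ (by positivity)]
    have h3 : R * (((n:ℝ)+15)/n) * (400000*(n:ℝ)^2) = 400000 * R * ((n:ℝ)+15) * n := by
      field_simp
    rw [h3]
    nlinarith [sq_nonneg ((n:ℝ) - 4)]
  nlinarith

/-- Lemma 15: in the instance `H` (with `φ = 400000·n²`, `r = (n−3)/n`), the
`(n+5)`-edge cycle `C₁ = (b,xᵢ,c,v,u,b)` has lower mean cost than the `(2n+8)`-edge
cycle `C₂ = (b,xᵢ,c,v,d,w_{i+1},a,u,b)`, for every realization of the edge costs in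
their intervals. -/
theorem stmt16 (n : ℕ) (hn : 4 ≤ n) (φ r : ℝ)
    (hφ : φ = 400000 * (n : ℝ) ^ 2) (hr : r = ((n : ℝ) - 3) / n)
    (i : ℕ) (hi1 : 1 ≤ i) (hin : i + 1 ≤ n) :
    (∀ (s : Fin (n + 3) → ℝ) (w t : ℝ) (p : Fin (2 * n + 6) → ℝ) (w' q : ℝ),
        (∀ j, s j ∈ Set.Icc (0 : ℝ) (1 / φ)) →
        w ∈ Set.Icc (-r ^ (2 * i - 1)) (-r ^ (2 * i - 1) + 1 / φ) →
        t ∈ Set.Icc (-(1 / φ)) (0 : ℝ) →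
        (∀ j, p j ∈ Set.Icc (0 : ℝ) (1 / φ)) →
        w' ∈ Set.Icc (-r ^ (2 * i - 1)) (-r ^ (2 * i - 1) + 1 / φ) →
        q ∈ Set.Icc (-r ^ (2 * i)) (-r ^ (2 * i) + 1 / φ) →
        (w + ∑ j, s j + t) / ((n : ℝ) + 5) < (w' + q + ∑ j, p j) / (2 * (n : ℝ) + 8))
    ∧ (-r ^ (2 * i - 1) + ((n : ℝ) + 4) / φ) / ((n : ℝ) + 5) <
        (-r ^ (2 * i - 1) - r ^ (2 * i)) / (2 * (n : ℝ) + 8) := by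
  have hn4 : (4:ℝ) ≤ n := by exact_mod_cast hn
  have hn0 : (0:ℝ) < n := by linarith
  have hφ0 : (0:ℝ) < φ := by rw [hφ]; positivity
  have hr0 : 0 ≤ r := by rw [hr]; exact div_nonneg (by linarith) (by linarith)
  have hr1 : r ≤ 1 := by
    rw [hr, div_le_one hn0]; linarith
  set R : ℝ := r ^ (2 * i - 1) with hRdef
  have hR : (1:ℝ)/40000 ≤ R := by
    calc (1:ℝ)/40000 ≤ r ^ (2 * n - 3) := rpow_lb' n hn r hr
      _ ≤ R := pow_le_pow_of_le_one hr0 hr1 (by omega)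
  have hpow : r ^ (2 * i) = R * r := by
    rw [hRdef, ← pow_succ]
    congr 1
    omega
  have hkey : (-R + ((n : ℝ) + 4) / φ) / ((n : ℝ) + 5) <
      (-R - r ^ (2 * i)) / (2 * (n : ℝ) + 8) := by
    rw [hpow, hφ]
    exact key' n hn R r hr hR
  refine ⟨?_, hkey⟩
  intro s w t p w' q hs hw ht hp hw' hq
  have hsum_s : ∑ j, s j ≤ ((n:ℝ) + 3) / φ := by
    calc ∑ j, s j ≤ ∑ _j : Fin (n+3), (1/φ) :=
          Finset.sum_le_sum (fun j _ => (hs j).2)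
      _ = ((n:ℝ) + 3) / φ := by
          rw [Finset.sum_const, Finset.card_univ, Fintype.card_fin, nsmul_eq_mul]
          push_cast; ring
  have hsum_p : (0:ℝ) ≤ ∑ j, p j := Finset.sum_nonneg (fun j _ => (hp j).1)
  have hnum1 : w + ∑ j, s j + t ≤ -R + ((n:ℝ) + 4) / φ := by
    have h1 := hw.2
    have h2 := ht.2
    have : ((n:ℝ) + 4) / φ = 1/φ + ((n:ℝ) + 3)/φ := by ring
    rw [this]
    linarith
  have hnum2 : -R - r ^ (2 * i) ≤ w' + q + ∑ j, p j := by
    have h1 := hw'.1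
    have h2 := hq.1
    linarith
  calc (w + ∑ j, s j + t) / ((n : ℝ) + 5)
      ≤ (-R + ((n:ℝ) + 4) / φ) / ((n : ℝ) + 5) := by gcongr
    _ < (-R - r ^ (2 * i)) / (2 * (n : ℝ) + 8) := hkey
    _ ≤ (w' + q + ∑ j, p j) / (2 * (n : ℝ) + 8) := by gcongr
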